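/- Let t ≥ 0, λ ≥ 0, and let V : ℝ → ℝ be integrable on [0,t] with V(s) ≥ 0 for all s ∈ [0,t]. Then ∫₀ᵗ V(s) · exp( 2 ∫ₛᵗ (V(r) − λ) dr ) ds ≤ (λ t + 1/2) · exp( 2 ∫₀ᵗ V(r) dr ). -/

import Mathlib

open MeasureTheory intervalIntegral

section Aux
open Filter Set

lemma ae_hasDerivAt_primitive (W : ℝ → ℝ) (hW : Integrable W) :
    ∀ᵐ x, HasDerivAt (fun y => ∫ r in (0:ℝ)..y, W r) (W x) x := by
  have hWint : ∀ a b : ℝ, IntervalIntegrable W volume a b := fun a b => hW.intervalIntegrable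
  have hGsub : ∀ a b : ℝ, (∫ r in (0:ℝ)..b, W r) - (∫ r in (0:ℝ)..a, W r) = ∫ r in a..b, W r := by
    intro a b
    rw [← intervalIntegral.integral_add_adjacent_intervals (hWint 0 a) (hWint a b)]
    ring
  filter_upwards [IsUnifLocDoublingMeasure.ae_tendsto_average (μ := (volume : Measure ℝ))
    hW.locallyIntegrable 1] with x hx
  rw [hasDerivAt_iff_tendsto_slope]
  have key : Tendsto (fun y : ℝ => ⨍ z in Metric.closedBall ((x+y)/2) (|y-x|/2), W z)
      (nhdsWithin x {x}ᶜ) (nhds (W x)) := by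
    apply hx (fun y => (x+y)/2) (fun y => |y - x|/2)
    · rw [tendsto_nhdsWithin_iff]
      constructor
      · have h1 : Tendsto (fun y : ℝ => |y - x|/2) (nhds x) (nhds (|x - x|/2)) :=
          ((continuous_abs.comp (continuous_id.sub continuous_const)).div_const 2).tendsto x
        simpa using h1.mono_left nhdsWithin_le_nhds
      · filter_upwards [self_mem_nhdsWithin] with y hy
        have : y - x ≠ 0 := sub_ne_zero.2 hy
        have := abs_pos.2 this
        simp only [Set.mem_Ioi]
        positivity
    · filter_upwards with y
      simp only [Metric.mem_closedBall, Real.dist_eq, one_mul]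
      have : x - (x+y)/2 = (x - y)/2 := by ring
      rw [this, abs_div, abs_sub_comm x y]
      simp
  refine key.congr' ?_
  filter_upwards [self_mem_nhdsWithin] with y hy
  have hyx : y ≠ x := hy
  rcases hyx.lt_or_gt with h | h
  · -- y < x : ball = Icc y x
    have hb : Metric.closedBall ((x+y)/2) (|y-x|/2) = Icc y x := by
      rw [Real.closedBall_eq_Icc, abs_of_neg (by linarith : y - x < 0)]
      congr 1 <;> ring
    rw [hb, setAverage_eq, measureReal_def, Real.volume_Icc, integral_Icc_eq_integral_Ioc,
      ← intervalIntegral.integral_of_le h.le, ← hGsub y x]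
    rw [ENNReal.toReal_ofReal (by linarith)]
    simp only [smul_eq_mul, slope_def_field]
    rw [show y - x = -(x - y) by ring, div_neg]
    ring
  · have hb : Metric.closedBall ((x+y)/2) (|y-x|/2) = Icc x y := by
      rw [Real.closedBall_eq_Icc, abs_of_pos (by linarith : 0 < y - x)]
      congr 1 <;> ring
    rw [hb, setAverage_eq, measureReal_def, Real.volume_Icc, integral_Icc_eq_integral_Ioc,
      ← intervalIntegral.integral_of_le h.le, ← hGsub x y]
    rw [ENNReal.toReal_ofReal (by linarith)]
    simp only [smul_eq_mul, slope_def_field]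
    field_simp

lemma core_half (t : ℝ) (W : ℝ → ℝ) (hW : Integrable W) (hWnn : ∀ x, 0 ≤ W x) :
    ∫ s in Set.Ioc (0:ℝ) t, W s * Real.exp (-2 * ∫ r in (0:ℝ)..s, W r) ≤ 1/2 := by
  set G : ℝ → ℝ := fun x => ∫ r in (0:ℝ)..x, W r with hGdef
  have hWint : ∀ a b : ℝ, IntervalIntegrable W volume a b := fun a b => hW.intervalIntegrable
  have hGsub : ∀ a b : ℝ, G b - G a = ∫ r in a..b, W r := by
    intro a b
    rw [hGdef]; dsimp only
    rw [← intervalIntegral.integral_add_adjacent_intervals (hWint 0 a) (hWint a b)]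
    ring
  have hGmono : Monotone G := by
    intro x y hxy
    have h1 := intervalIntegral.integral_nonneg (μ := volume) hxy (fun u _ => hWnn u)
    have h2 := hGsub x y
    linarith
  have hG0 : G 0 = 0 := intervalIntegral.integral_same
  have hGnn : ∀ x ∈ Set.Ioc (0:ℝ) t, 0 ≤ G x := fun x hx => hG0 ▸ hGmono hx.1.le
  -- measurable representative
  set Wm : ℝ → ℝ := (hW.1.mk W) with hWmdef
  have hWm_meas : StronglyMeasurable Wm := hW.1.stronglyMeasurable_mk
  have hWm_ae : W =ᵐ[volume] Wm := hW.1.ae_eq_mk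
  -- null sets
  set T₁ : Set ℝ := toMeasurable volume {x | ¬ HasDerivAt G (W x) x} with hT₁def
  set T₂ : Set ℝ := toMeasurable volume {x | W x ≠ Wm x} with hT₂def
  have hT₁null : volume T₁ = 0 := by
    rw [hT₁def, measure_toMeasurable]
    exact ae_hasDerivAt_primitive W hW
  have hT₂null : volume T₂ = 0 := by
    rw [hT₂def, measure_toMeasurable]
    exact hWm_ae
  set A : Set ℝ := (Set.Ioc 0 t ∩ {x | 0 < Wm x}) \ (T₁ ∪ T₂) with hAdef
  have hA : MeasurableSet A := by
    apply MeasurableSet.diff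
    · exact measurableSet_Ioc.inter (hWm_meas.measurable measurableSet_Ioi)
    · exact (measurableSet_toMeasurable _ _).union (measurableSet_toMeasurable _ _)
  have hAsub : A ⊆ Set.Ioc 0 t := fun x hx => hx.1.1
  have hAprop : ∀ x ∈ A, 0 < W x ∧ HasDerivAt G (W x) x := by
    intro x hx
    have hnt : x ∉ T₁ ∪ T₂ := hx.2
    have hW_eq : W x = Wm x := by
      by_contra hne
      exact hnt (Or.inr (subset_toMeasurable _ _ hne))
    have hd : HasDerivAt G (W x) x := by
      by_contra hne
      exact hnt (Or.inl (subset_toMeasurable _ _ hne))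
    exact ⟨hW_eq ▸ hx.1.2, hd⟩
  -- injectivity
  have key : ∀ x y : ℝ, x < y → 0 < W x → HasDerivAt G (W x) x → G x = G y → False := by
    intro x y hxy hpos hd heq
    rw [hasDerivAt_iff_tendsto_slope] at hd
    have hne : (nhdsWithin x (Set.Ioo x y)).NeBot := by
      rw [← mem_closure_iff_nhdsWithin_neBot, closure_Ioo hxy.ne]
      exact ⟨le_refl x, hxy.le⟩
    have hsub : nhdsWithin x (Set.Ioo x y) ≤ nhdsWithin x {x}ᶜ :=
      nhdsWithin_mono x (fun z hz => ne_of_gt hz.1)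
    have h0 : Tendsto (slope G x) (nhdsWithin x (Set.Ioo x y)) (nhds 0) := by
      apply Tendsto.congr' _ tendsto_const_nhds
      filter_upwards [self_mem_nhdsWithin] with z hz
      have h1 : G x ≤ G z := hGmono hz.1.le
      have h2 : G z ≤ G y := hGmono hz.2.le
      have : G z = G x := le_antisymm (heq ▸ h2) h1
      simp [slope_def_field, this]
    have := tendsto_nhds_unique (hd.mono_left hsub) h0
    linarith
  have hinj : Set.InjOn G A := by
    intro a ha b hb hab
    by_contra hne
    rcases Ne.lt_or_gt hne with h | h
    · exact key a b h (hAprop a ha).1 (hAprop a ha).2 hab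
    · exact key b a h (hAprop b hb).1 (hAprop b hb).2 hab.symm
  -- change of variables
  have hCoV := integral_image_eq_integral_abs_deriv_smul hA
      (fun x hx => ((hAprop x hx).2).hasDerivWithinAt) hinj (fun u => Real.exp (-2*u))
  -- integrand
  set f : ℝ → ℝ := fun s => W s * Real.exp (-2 * G s) with hfdef
  have hf_nn : ∀ x, 0 ≤ f x := fun x => mul_nonneg (hWnn x) (Real.exp_pos _).le
  have hGcont : Continuous G := intervalIntegral.continuous_primitive hWint 0
  have hf_int : IntegrableOn f (Set.Ioc 0 t) := by
    have h1 : Integrable (fun x => Real.exp (-2 * G x) * W x) (volume.restrict (Set.Ioc 0 t)) := by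
      apply Integrable.bdd_mul (c := 1) (hW.restrict)
      · exact (Real.continuous_exp.comp (continuous_const.mul hGcont)).aestronglyMeasurable.restrict
      · filter_upwards [ae_restrict_mem measurableSet_Ioc] with x hx
        rw [Real.norm_eq_abs, abs_of_nonneg (Real.exp_pos _).le, Real.exp_le_one_iff]
        have := hGnn x hx
        linarith
    exact (integrable_congr (Filter.Eventually.of_forall fun x => mul_comm _ _)).1 h1
  -- split the integral
  have hsplit : ∫ s in Set.Ioc (0:ℝ) t, f s = ∫ s in A, f s := by
    have hzero : ∫ s in (Set.Ioc 0 t \ A), f s = 0 := by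
      apply integral_eq_zero_of_ae
      have hT : volume (T₁ ∪ T₂) = 0 := by
        rw [measure_union_null_iff]; exact ⟨hT₁null, hT₂null⟩
      filter_upwards [ae_restrict_mem (measurableSet_Ioc.diff hA),
        ae_restrict_of_ae (measure_eq_zero_iff_ae_notMem.1 hT)] with x hx hxT
      have hxIoc : x ∈ Set.Ioc (0:ℝ) t := hx.1
      have hxA : x ∉ A := hx.2
      have hW_eq : W x = Wm x := by
        by_contra hne
        exact hxT (Or.inr (subset_toMeasurable _ _ hne))
      have hWm_le : Wm x ≤ 0 := by
        by_contra hpos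
        exact hxA ⟨⟨hxIoc, lt_of_not_ge hpos⟩, hxT⟩
      have : W x = 0 := le_antisymm (hW_eq ▸ hWm_le) (hWnn x)
      simp [hfdef, this]
    have hunion : A ∪ (Set.Ioc 0 t \ A) = Set.Ioc 0 t := Set.union_diff_cancel hAsub
    rw [← hunion, setIntegral_union Set.disjoint_sdiff_right (measurableSet_Ioc.diff hA)
      (hf_int.mono_set hAsub) (hf_int.mono_set Set.diff_subset), hzero, add_zero]
  -- rewrite the A integral via the change of variables
  have hcong : ∫ s in A, f s = ∫ x in A, |W x| • Real.exp (-2 * G x) := by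
    apply setIntegral_congr_fun hA
    intro x hx
    rw [hfdef]
    simp only [smul_eq_mul]
    rw [abs_of_pos (hAprop x hx).1]
  -- bound the image integral
  have himg_sub : G '' A ⊆ Set.Ici 0 := by
    rintro _ ⟨x, hx, rfl⟩
    exact hGnn x (hAsub hx)
  have hexp_int : IntegrableOn (fun u => Real.exp (-2 * u)) (Set.Ici 0) := by
    rw [integrableOn_Ici_iff_integrableOn_Ioi]
    exact exp_neg_integrableOn_Ioi 0 two_pos
  have himg_le : ∫ u in G '' A, Real.exp (-2 * u) ≤ ∫ u in Set.Ici 0, Real.exp (-2 * u) := by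
    apply setIntegral_mono_set hexp_int
    · exact Filter.Eventually.of_forall fun u => (Real.exp_pos _).le
    · exact HasSubset.Subset.eventuallyLE himg_sub
  have hval : ∫ u in Set.Ici (0:ℝ), Real.exp (-2 * u) = 1/2 := by
    rw [integral_Ici_eq_integral_Ioi]
    have h2 : ∫ u in Set.Ioi (0:ℝ), Real.exp (-(2 * u)) = (2:ℝ)⁻¹ • ∫ u in Set.Ioi (2*(0:ℝ)), Real.exp (-u) :=
      integral_comp_mul_left_Ioi (fun u => Real.exp (-u)) 0 two_pos
    simp only [mul_zero, neg_mul] at h2 ⊢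
    rw [h2, integral_exp_neg_Ioi]
    norm_num
  calc ∫ s in Set.Ioc (0:ℝ) t, f s = ∫ x in A, |W x| • Real.exp (-2 * G x) := by
        rw [hsplit, hcong]
    _ = ∫ u in G '' A, Real.exp (-2 * u) := hCoV.symm
    _ ≤ ∫ u in Set.Ici 0, Real.exp (-2 * u) := himg_le
    _ = 1/2 := hval

end Aux

/-- The a priori bound
`∫₀ᵗ V(s) e^{2∫ₛᵗ (V(r) − λ) dr} ds ≤ (λ t + 1/2) e^{2∫₀ᵗ V(r) dr}`. -/
theorem integral_exp_bound
    (t lam : ℝ) (ht : 0 ≤ t) (hlam : 0 ≤ lam)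
    (V : ℝ → ℝ) (hV : IntegrableOn V (Set.Icc 0 t))
    (hVpos : ∀ s ∈ Set.Icc (0 : ℝ) t, 0 ≤ V s) :
    (∫ s in (0 : ℝ)..t, V s * Real.exp (2 * ∫ r in s..t, (V r - lam)))
      ≤ (lam * t + 1 / 2) * Real.exp (2 * ∫ r in (0 : ℝ)..t, V r) := by
  set W : ℝ → ℝ := (Set.Icc (0:ℝ) t).indicator V with hWdef
  have hWV : ∀ x ∈ Set.Icc (0:ℝ) t, W x = V x := fun x hx => Set.indicator_of_mem hx V
  have hWnn : ∀ x, 0 ≤ W x := by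
    intro x
    by_cases hx : x ∈ Set.Icc (0:ℝ) t
    · rw [hWV x hx]; exact hVpos x hx
    · rw [hWdef, Set.indicator_of_notMem hx]
  have hWInt : Integrable W := (integrable_indicator_iff measurableSet_Icc).2 hV
  have hWint : ∀ a b : ℝ, IntervalIntegrable W volume a b := fun a b => hWInt.intervalIntegrable
  set G : ℝ → ℝ := fun x => ∫ r in (0:ℝ)..x, W r with hGdef
  have hGsub : ∀ a b : ℝ, G b - G a = ∫ r in a..b, W r := by
    intro a b
    rw [hGdef]; dsimp only
    rw [← intervalIntegral.integral_add_adjacent_intervals (hWint 0 a) (hWint a b)]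
    ring
  have hGt : G t = ∫ r in (0:ℝ)..t, V r := by
    apply intervalIntegral.integral_congr
    intro r hr
    rw [Set.uIcc_of_le ht] at hr
    exact hWV r hr
  have hIcc_sub : ∀ s ∈ Set.Icc (0:ℝ) t, Set.uIcc s t ⊆ Set.Icc 0 t := by
    intro s hs
    rw [Set.uIcc_of_le hs.2]
    exact Set.Icc_subset_Icc hs.1 le_rfl
  have hstep : ∀ s ∈ Set.Icc (0:ℝ) t,
      (∫ r in s..t, (V r - lam)) = (G t - G s) - lam * (t - s) := by
    intro s hs
    rw [intervalIntegral.integral_sub ((hV.mono_set (hIcc_sub s hs)).intervalIntegrable)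
      intervalIntegrable_const, intervalIntegral.integral_const]
    have h1 : (∫ r in s..t, V r) = ∫ r in s..t, W r :=
      intervalIntegral.integral_congr (fun r hr => (hWV r (hIcc_sub s hs hr)).symm)
    rw [h1, ← hGsub s t, smul_eq_mul]
    ring
  have hLHS : (∫ s in (0 : ℝ)..t, V s * Real.exp (2 * ∫ r in s..t, (V r - lam)))
      = ∫ s in (0:ℝ)..t, V s * Real.exp (2 * ((G t - G s) - lam * (t - s))) := by
    apply intervalIntegral.integral_congr
    intro s hs
    rw [Set.uIcc_of_le ht] at hs
    dsimp only
    rw [hstep s hs]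
  have hGcont : Continuous G := intervalIntegral.continuous_primitive hWint 0
  have hVii : IntervalIntegrable V volume 0 t := by
    have : IntegrableOn V (Set.uIcc 0 t) := by rw [Set.uIcc_of_le ht]; exact hV
    exact this.intervalIntegrable
  have hcont1 : ContinuousOn (fun s => Real.exp (2 * ((G t - G s) - lam * (t - s))))
      (Set.uIcc 0 t) := by
    apply Continuous.continuousOn
    apply Real.continuous_exp.comp
    exact (continuous_const.mul ((continuous_const.sub hGcont).sub
      (continuous_const.mul (continuous_const.sub continuous_id))))
  have hcont2 : ContinuousOn (fun s => Real.exp (2 * (G t - G s))) (Set.uIcc 0 t) := by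
    apply Continuous.continuousOn
    exact Real.continuous_exp.comp (continuous_const.mul (continuous_const.sub hGcont))
  have h2 : (∫ s in (0:ℝ)..t, V s * Real.exp (2 * ((G t - G s) - lam * (t - s))))
      ≤ ∫ s in (0:ℝ)..t, V s * Real.exp (2 * (G t - G s)) := by
    apply intervalIntegral.integral_mono_on ht (hVii.mul_continuousOn hcont1)
      (hVii.mul_continuousOn hcont2)
    intro s hs
    apply mul_le_mul_of_nonneg_left _ (hVpos s hs)
    apply Real.exp_le_exp.2
    have : 0 ≤ lam * (t - s) := mul_nonneg hlam (by linarith [hs.2])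
    nlinarith
  have h3 : (∫ s in (0:ℝ)..t, V s * Real.exp (2 * (G t - G s)))
      = Real.exp (2 * G t) * ∫ s in (0:ℝ)..t, V s * Real.exp (-2 * G s) := by
    rw [← intervalIntegral.integral_const_mul]
    apply intervalIntegral.integral_congr
    intro s _
    dsimp only
    rw [show 2 * (G t - G s) = 2 * G t + (-2 * G s) by ring, Real.exp_add]
    ring
  have h4 : (∫ s in (0:ℝ)..t, V s * Real.exp (-2 * G s)) ≤ 1/2 := by
    have h5 : (∫ s in (0:ℝ)..t, V s * Real.exp (-2 * G s))
        = ∫ s in (0:ℝ)..t, W s * Real.exp (-2 * G s) := by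
      apply intervalIntegral.integral_congr
      intro s hs
      rw [Set.uIcc_of_le ht] at hs
      dsimp only
      rw [hWV s hs]
    rw [h5, intervalIntegral.integral_of_le ht]
    exact core_half t W hWInt hWnn
  have hexp_pos := Real.exp_pos (2 * G t)
  calc (∫ s in (0 : ℝ)..t, V s * Real.exp (2 * ∫ r in s..t, (V r - lam)))
      ≤ ∫ s in (0:ℝ)..t, V s * Real.exp (2 * (G t - G s)) := by rw [hLHS]; exact h2
    _ = Real.exp (2 * G t) * ∫ s in (0:ℝ)..t, V s * Real.exp (-2 * G s) := h3
    _ ≤ Real.exp (2 * G t) * (1/2) := by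
        apply mul_le_mul_of_nonneg_left h4 hexp_pos.le
    _ ≤ (lam * t + 1 / 2) * Real.exp (2 * ∫ r in (0 : ℝ)..t, V r) := by
        rw [← hGt]
        nlinarith [mul_nonneg hlam ht]
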